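/- For a bipartite graph G with n vertices and m edges, the Laplacian Estrada index satisfies LEE(G) = n - m + e^2 · EE(L(G)), where L(G) is the line graph of G. -/

import Mathlib

/-- The adjacency matrix of a graph (over `ℝ`) is Hermitian. -/
theorem adjMatrix_isHermitian {V : Type*} [Fintype V] [DecidableEq V] (G : SimpleGraph V)
    [DecidableRel G.Adj] : (G.adjMatrix ℝ).IsHermitian := by
  rw [Matrix.IsHermitian, Matrix.conjTranspose_eq_transpose_of_trivial]
  exact G.isSymm_adjMatrix

/-- Laplacian Estrada index: the sum of `exp` over the Laplacian eigenvalues. -/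
noncomputable def LEE {V : Type*} [Fintype V] [DecidableEq V] (G : SimpleGraph V) : ℝ :=
  letI := Classical.decRel G.Adj
  ∑ i : V, Real.exp ((SimpleGraph.posSemidef_lapMatrix ℝ G).1.eigenvalues i)

/-- Estrada index: the sum of `exp` over the adjacency eigenvalues. -/
noncomputable def EE {V : Type*} [Fintype V] [DecidableEq V] (G : SimpleGraph V) : ℝ :=
  letI := Classical.decRel G.Adj
  ∑ i : V, Real.exp ((adjMatrix_isHermitian G).eigenvalues i)

open NormedSpace Matrix SimpleGraph

section AuxAnalytic

variable {n : Type*} [Fintype n] [DecidableEq n] {m : Type*} [Fintype m] [DecidableEq m]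

/-- The trace of `exp` of a Hermitian real matrix is the sum of `exp` of its eigenvalues. -/
lemma my_trace_exp_hermitian {A : Matrix n n ℝ} (hA : A.IsHermitian) :
    (exp A).trace = ∑ i, Real.exp (hA.eigenvalues i) := by
  set U : Matrix n n ℝ := (hA.eigenvectorUnitary : Matrix n n ℝ) with hUdef
  have hU1 : U * star U = 1 := (Matrix.mem_unitaryGroup_iff).mp hA.eigenvectorUnitary.2
  have hU2 : star U * U = 1 := (Matrix.mem_unitaryGroup_iff').mp hA.eigenvectorUnitary.2
  have hinv : U⁻¹ = star U := Matrix.inv_eq_right_inv hU1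
  have hU : IsUnit U := ⟨⟨U, star U, hU1, hU2⟩, rfl⟩
  have hd : (RCLike.ofReal ∘ hA.eigenvalues : n → ℝ) = hA.eigenvalues := by
    ext i; simp
  conv_lhs => rw [hA.spectral_theorem, Unitary.conjStarAlgAut_apply, ← hUdef, hd, ← hinv]
  rw [Matrix.exp_conj U _ hU, Matrix.trace_mul_comm, ← Matrix.mul_assoc, hinv, hU2, one_mul,
    Matrix.exp_diagonal, Matrix.trace_diagonal]
  congr 1
  ext i
  rw [Pi.exp_def, Real.exp_eq_exp_ℝ]

attribute [local instance] Matrix.linftyOpNormedRing Matrix.linftyOpNormedAlgebra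

lemma my_trace_exp_tsum (A : Matrix n n ℝ) :
    (exp A).trace = ∑' k : ℕ, ((k.factorial : ℝ)⁻¹ * (A ^ k).trace) := by
  have hsum : Summable fun k : ℕ => ((k.factorial : ℝ)⁻¹ : ℝ) • A ^ k :=
    expSeries_summable' (𝕂 := ℝ) A
  let T : Matrix n n ℝ →ₗ[ℝ] ℝ := Matrix.traceLinearMap n ℝ ℝ
  have tc : Continuous T := T.continuous_of_finiteDimensional
  let Tc : Matrix n n ℝ →L[ℝ] ℝ := ⟨T, tc⟩
  have h2 : (∑' k : ℕ, ((k.factorial : ℝ)⁻¹ : ℝ) • A ^ k).trace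
      = ∑' k : ℕ, (((k.factorial : ℝ)⁻¹ : ℝ) • A ^ k).trace := Tc.map_tsum hsum
  rw [exp_eq_tsum (𝕂 := ℝ)]
  beta_reduce
  rw [h2]
  exact tsum_congr fun k => by simp [Matrix.trace_smul, smul_eq_mul]

lemma my_summable_trace (A : Matrix n n ℝ) :
    Summable fun k : ℕ => ((k.factorial : ℝ)⁻¹ * (A ^ k).trace) := by
  have hsum : Summable fun k : ℕ => ((k.factorial : ℝ)⁻¹ : ℝ) • A ^ k :=
    expSeries_summable' (𝕂 := ℝ) A
  let T : Matrix n n ℝ →ₗ[ℝ] ℝ := Matrix.traceLinearMap n ℝ ℝ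
  have tc : Continuous T := T.continuous_of_finiteDimensional
  have h2 := hsum.map T tc
  have h3 : (⇑T ∘ fun k : ℕ => ((k.factorial : ℝ)⁻¹ : ℝ) • A ^ k) =
      fun k : ℕ => ((k.factorial : ℝ)⁻¹ * (A ^ k).trace) := by
    funext k; simp [T, Matrix.trace_smul, smul_eq_mul]
  rwa [h3] at h2

lemma my_pow_mul (X : Matrix n m ℝ) (Y : Matrix m n ℝ) (k : ℕ) :
    (X * Y) ^ (k + 1) = X * (Y * X) ^ k * Y := by
  induction k with
  | zero => simp
  | succ k ih =>
    rw [pow_succ, ih, pow_succ]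
    simp only [Matrix.mul_assoc]

/-- For rectangular `X`, `Y`, the traces of `exp (X * Y)` and `exp (Y * X)` differ by the
difference of the dimensions. -/
lemma my_trace_exp_sub (X : Matrix n m ℝ) (Y : Matrix m n ℝ) :
    (exp (X * Y)).trace - Fintype.card n = (exp (Y * X)).trace - Fintype.card m := by
  have h1 := my_trace_exp_tsum (X * Y)
  have h2 := my_trace_exp_tsum (Y * X)
  have s1 := my_summable_trace (X * Y)
  have s2 := my_summable_trace (Y * X)
  rw [h1, h2, Summable.tsum_eq_zero_add s1, Summable.tsum_eq_zero_add s2]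
  simp only [pow_zero, Matrix.trace_one, Nat.factorial_zero, Nat.cast_one, inv_one, one_mul]
  have h3 : ∀ k : ℕ, ((X * Y) ^ (k + 1)).trace = ((Y * X) ^ (k + 1)).trace := by
    intro k
    rw [my_pow_mul, Matrix.mul_assoc, Matrix.trace_mul_comm, Matrix.mul_assoc, ← pow_succ]
  simp_rw [h3]
  ring

/-- Trace of `exp (A + 2 • 1)` in terms of trace of `exp A`. -/
lemma my_trace_exp_add_two (A : Matrix n n ℝ) :
    (exp (A + (2:ℝ) • 1)).trace = Real.exp 2 * (exp A).trace := by
  have hc : Commute A ((2:ℝ) • (1 : Matrix n n ℝ)) := (Commute.one_right A).smul_right 2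
  rw [Matrix.exp_add_of_commute A _ hc]
  have h1 : ((2:ℝ) • (1 : Matrix n n ℝ)) = Matrix.diagonal (fun _ => (2:ℝ)) :=
    Matrix.smul_one_eq_diagonal 2
  have h2 : (exp (fun _ : n => (2:ℝ))) = fun _ => Real.exp 2 := by
    funext i; rw [Pi.exp_def, Real.exp_eq_exp_ℝ]
  rw [h1, Matrix.exp_diagonal, h2]
  have h3 : exp A * Matrix.diagonal (fun _ : n => Real.exp 2) = Real.exp 2 • exp A := by
    ext i j; simp [Matrix.mul_diagonal, mul_comm]
  rw [h3, Matrix.trace_smul, smul_eq_mul]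

end AuxAnalytic

section Comb

variable {V : Type*} [Fintype V] [DecidableEq V] (G : SimpleGraph V) [DecidableRel G.Adj]

/-- The (unsigned) incidence matrix of a graph. -/
noncomputable def myInc : Matrix V G.edgeSet ℝ :=
  Matrix.of fun v e => if v ∈ (e : Sym2 V) then (1:ℝ) else 0

lemma myInc_mul_transpose : myInc G * (myInc G)ᵀ = G.degMatrix ℝ + G.adjMatrix ℝ := by
  ext v w
  simp only [Matrix.mul_apply, Matrix.transpose_apply, myInc, Matrix.of_apply, Matrix.add_apply]
  have h1 : ∀ e : G.edgeSet,
      (if v ∈ (e : Sym2 V) then (1:ℝ) else 0) * (if w ∈ (e : Sym2 V) then (1:ℝ) else 0)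
      = if v ∈ (e : Sym2 V) ∧ w ∈ (e : Sym2 V) then (1:ℝ) else 0 := fun e => by
    by_cases hv : v ∈ (e : Sym2 V) <;> by_cases hw : w ∈ (e : Sym2 V) <;> simp [hv, hw]
  rw [Finset.sum_congr rfl fun e _ => h1 e,
    ← Finset.sum_subtype G.edgeFinset (fun e => G.mem_edgeFinset)
      (fun e => if v ∈ e ∧ w ∈ e then (1:ℝ) else 0),
    Finset.sum_boole]
  by_cases hvw : v = w
  · subst hvw
    have h2 : {e ∈ G.edgeFinset | v ∈ e ∧ v ∈ e} = G.incidenceFinset v := by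
      rw [incidenceFinset_eq_filter]
      exact Finset.filter_congr fun e _ => by simp
    rw [h2, card_incidenceFinset_eq_degree]
    simp [degMatrix, Matrix.diagonal_apply_eq]
  · have hdeg : G.degMatrix ℝ v w = 0 := Matrix.diagonal_apply_ne _ hvw
    rw [hdeg, zero_add]
    by_cases hadj : G.Adj v w
    · have h2 : {e ∈ G.edgeFinset | v ∈ e ∧ w ∈ e} = {s(v, w)} := by
        ext e
        simp only [Finset.mem_filter, Finset.mem_singleton, mem_edgeFinset]
        constructor
        · rintro ⟨he, hv, hw⟩
          exact (Sym2.mem_and_mem_iff hvw).mp ⟨hv, hw⟩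
        · rintro rfl
          exact ⟨G.mem_edgeSet.mpr hadj, Sym2.mem_mk_left _ _, Sym2.mem_mk_right _ _⟩
      rw [h2]
      simp [hadj]
    · have h2 : {e ∈ G.edgeFinset | v ∈ e ∧ w ∈ e} = ∅ := by
        ext e
        simp only [Finset.mem_filter, Finset.notMem_empty, iff_false, not_and, mem_edgeFinset]
        intro he hv hw
        exact hadj (G.mem_edgeSet.mp ((Sym2.mem_and_mem_iff hvw).mp ⟨hv, hw⟩ ▸ he))
      rw [h2]
      simp [hadj]

omit [DecidableRel G.Adj] in
lemma myTranspose_mul_inc [inst : DecidableRel G.lineGraph.Adj] :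
    (myInc G)ᵀ * myInc G = (G.lineGraph).adjMatrix ℝ + (2:ℝ) • 1 := by
  ext e f
  simp only [Matrix.mul_apply, Matrix.transpose_apply, myInc, Matrix.of_apply, Matrix.add_apply,
    Matrix.smul_apply, Matrix.one_apply, adjMatrix_apply, smul_eq_mul]
  have h1 : ∀ v : V,
      (if v ∈ (e : Sym2 V) then (1:ℝ) else 0) * (if v ∈ (f : Sym2 V) then (1:ℝ) else 0)
      = if v ∈ (e : Sym2 V) ∧ v ∈ (f : Sym2 V) then (1:ℝ) else 0 := fun v => by
    by_cases hv : v ∈ (e : Sym2 V) <;> by_cases hw : v ∈ (f : Sym2 V) <;> simp [hv, hw]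
  rw [Finset.sum_congr rfl fun v _ => h1 v, Finset.sum_boole]
  by_cases hef : e = f
  · subst hef
    have hnadj : ¬ G.lineGraph.Adj e e := G.lineGraph.irrefl
    obtain ⟨es, he⟩ := e
    induction es using Sym2.ind with
    | _ a b =>
      have hab : a ≠ b := fun h => G.not_isDiag_of_mem_edgeSet he (Sym2.mk_isDiag_iff.mpr h)
      have h2 : ({v ∈ Finset.univ | v ∈ s(a, b) ∧ v ∈ s(a, b)} : Finset V) = {a, b} := by
        ext v
        simp [Sym2.mem_iff]
      simp only [hnadj, if_false, if_pos rfl, zero_add]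
      rw [h2, Finset.card_pair hab]
      norm_num
  · simp only [hef, if_false, add_zero]
    by_cases hadj : G.lineGraph.Adj e f
    · obtain ⟨-, v, hv1, hv2⟩ := lineGraph_adj_iff_exists.mp hadj
      have h2 : ({w ∈ Finset.univ | w ∈ (e : Sym2 V) ∧ w ∈ (f : Sym2 V)} : Finset V) = {v} := by
        ext w
        simp only [Finset.mem_filter, Finset.mem_univ, true_and, Finset.mem_singleton]
        constructor
        · rintro ⟨hw1, hw2⟩
          by_contra hne
          have he2 : (e : Sym2 V) = s(w, v) := (Sym2.mem_and_mem_iff hne).mp ⟨hw1, hv1⟩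
          have hf2 : (f : Sym2 V) = s(w, v) := (Sym2.mem_and_mem_iff hne).mp ⟨hw2, hv2⟩
          exact hef (Subtype.ext (he2.trans hf2.symm))
        · rintro rfl
          exact ⟨hv1, hv2⟩
      rw [h2]
      simp [hadj]
    · have h2 : ({w ∈ Finset.univ | w ∈ (e : Sym2 V) ∧ w ∈ (f : Sym2 V)} : Finset V) = ∅ := by
        ext w
        simp only [Finset.mem_filter, Finset.mem_univ, true_and, Finset.notMem_empty, iff_false,
          not_and]
        intro hw1 hw2
        exact hadj (lineGraph_adj_iff_exists.mpr ⟨hef, w, hw1, hw2⟩)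
      rw [h2]
      simp [hadj]

lemma myConj_lap (c : G.Coloring (Fin 2)) :
    (Matrix.diagonal fun v => if c v = 0 then (1:ℝ) else -1) * (G.degMatrix ℝ + G.adjMatrix ℝ) *
      (Matrix.diagonal fun v => if c v = 0 then (1:ℝ) else -1) = G.lapMatrix ℝ := by
  ext v w
  rw [Matrix.mul_assoc]
  simp only [Matrix.diagonal_mul, Matrix.mul_diagonal, Matrix.add_apply, lapMatrix,
    Matrix.sub_apply, adjMatrix_apply, degMatrix]
  by_cases hvw : v = w
  · subst hvw
    simp only [Matrix.diagonal_apply_eq, G.irrefl, if_false, add_zero, sub_zero]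
    by_cases h : c v = 0 <;> simp [h]
  · simp only [Matrix.diagonal_apply_ne _ hvw, zero_add, zero_sub]
    by_cases hadj : G.Adj v w
    · have hc : c v ≠ c w := c.valid hadj
      have h0 : ∀ x : Fin 2, x = 0 ∨ x = 1 := by decide
      simp only [hadj, if_true]
      rcases h0 (c v) with h1 | h1 <;> rcases h0 (c w) with h2 | h2 <;>
        rw [h1] at hc ⊢ <;> rw [h2] at hc ⊢ <;> simp_all
    · simp [hadj]

/-- For bipartite `G`, `exp` of the Laplacian and of the signless Laplacian have equal traces. -/
lemma myTrace_exp_lap (c : G.Coloring (Fin 2)) :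
    (exp (G.lapMatrix ℝ)).trace = (exp (G.degMatrix ℝ + G.adjMatrix ℝ)).trace := by
  set S : Matrix V V ℝ := Matrix.diagonal fun v => if c v = 0 then (1:ℝ) else -1 with hS
  have hSS : S * S = 1 := by
    rw [hS, Matrix.diagonal_mul_diagonal]
    ext i j
    by_cases hij : i = j
    · subst hij
      by_cases h : c i = 0 <;> simp [h, Matrix.one_apply]
    · simp [Matrix.diagonal_apply_ne _ hij, Matrix.one_apply_ne hij]
  have hinv : S⁻¹ = S := Matrix.inv_eq_right_inv hSS
  have hU : IsUnit S := ⟨⟨S, S, hSS, hSS⟩, rfl⟩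
  rw [← myConj_lap G c]
  conv_lhs => rw [show (S * (G.degMatrix ℝ + G.adjMatrix ℝ) * S : Matrix V V ℝ)
    = S * (G.degMatrix ℝ + G.adjMatrix ℝ) * S⁻¹ from by rw [hinv]]
  rw [Matrix.exp_conj S _ hU, Matrix.trace_mul_comm, ← Matrix.mul_assoc, hinv, hSS, one_mul]

end Comb

/-- For a bipartite graph `G` with `n` vertices and `m` edges,
`LEE G = n - m + e² · EE(L(G))` where `L(G)` is the line graph of `G`. -/
theorem lee_eq_of_bipartite {V : Type*} [Fintype V] [DecidableEq V]
    (G : SimpleGraph V) [DecidableRel G.Adj] (hbip : G.Colorable 2) :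
    LEE G = (Fintype.card V : ℝ) - (G.edgeFinset.card : ℝ) +
      Real.exp 2 * EE G.lineGraph := by
  obtain ⟨c⟩ := hbip
  haveI hSS : Subsingleton (DecidableRel G.Adj) :=
    ⟨fun a b => funext fun x => funext fun y => Subsingleton.elim _ _⟩
  have hinst : (Classical.decRel G.Adj) = ‹DecidableRel G.Adj› := Subsingleton.elim _ _
  have hmat : (letI := Classical.decRel G.Adj; G.lapMatrix ℝ) = G.lapMatrix ℝ := by
    rw [hinst]
  have hLEE : LEE G = (exp (G.lapMatrix ℝ)).trace := by
    rw [LEE, ← hmat]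
    exact (my_trace_exp_hermitian _).symm
  letI instL : DecidableRel G.lineGraph.Adj := Classical.decRel G.lineGraph.Adj
  have hEE : EE G.lineGraph = (exp (G.lineGraph.adjMatrix ℝ)).trace := by
    rw [EE]
    exact (my_trace_exp_hermitian _).symm
  have hcard : (G.edgeFinset.card : ℕ) = Fintype.card G.edgeSet := Set.toFinset_card _
  have key := my_trace_exp_sub (myInc G) (myInc G)ᵀ
  rw [myInc_mul_transpose, myTranspose_mul_inc (inst := instL), my_trace_exp_add_two] at key
  rw [hLEE, hEE, myTrace_exp_lap G c, hcard]
  linarith [key]
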